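/- Let K be a field of characteristic 0, n ≥ 1, and X ∈ Matₙ(K) with tr X = 0. Then the bilinear map η_X : Matₙ(K) × Matₙ(K) → Matₙ(K), η_X(a,b) = (tr b)·(X·a − a·X), is a right-symmetric 2-cocycle of glₙ with coefficients in the regular module: d_rsym η_X = 0, i.e. a·η_X(b,c) − a·η_X(c,b) − η_X(a·b, c) + η_X(a·c, b) + η_X(a, [b,c]) − η_X(a,b)·c + η_X(a,c)·b = 0 for all a,b,c ∈ Matₙ(K). -/
import Mathlib


/-- The 2-cochain `η_X(a,b) = (tr b)·[X,a]` on `glₙ`. -/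
def glEta {K : Type*} [Field K] (n : ℕ) (X : Matrix (Fin n) (Fin n) K)
    (a b : Matrix (Fin n) (Fin n) K) : Matrix (Fin n) (Fin n) K :=
  b.trace • (X * a - a * X)

/-- Over a field of characteristic 0, for `X ∈ slₙ` (trace zero), the map
`η_X(a,b) = (tr b)·[X,a]` is a right-symmetric 2-cocycle of `glₙ` with
coefficients in the regular module: `d_rsym η_X = 0`. -/
theorem glEta_cocycle
    {K : Type*} [Field K] [CharZero K] (n : ℕ) (hn : 1 ≤ n)
    (X : Matrix (Fin n) (Fin n) K) (hX : X.trace = 0) :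
    ∀ a b c : Matrix (Fin n) (Fin n) K,
      a * glEta n X b c - a * glEta n X c b - glEta n X (a * b) c
        + glEta n X (a * c) b + glEta n X a (b * c - c * b)
        - glEta n X a b * c + glEta n X a c * b = 0 := by
  intro a b c
  simp only [glEta, Matrix.trace_sub, Matrix.trace_mul_comm b c, sub_self, zero_smul,
    mul_smul_comm, smul_mul_assoc, smul_sub, mul_sub, sub_mul, add_zero, mul_assoc]
  module
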